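/- In a synchronous message-passing system with p nodes where at any iteration the set of delayed (undelivered) messages has size at most f, and stochastic gradients satisfy E[‖G̃(x)‖²] ≤ M², each node's view satisfies E[‖v_t^i - x_t‖²] ≤ α²f²M²/p² for all iterations t. -/

import Mathlib

open MeasureTheory

/-- message-omission elastic consistency bound.  At any iteration the number
of delayed (undelivered) messages is at most `f`, so node `i`'s view differs from the true
parameter `x_t` by the sum of at most `f` missing terms, each of the form `(α/p)·G̃(v_s^j)`
with second moment `≤ M²`.  Then `E‖v_t^i - x_t‖² ≤ α² f² M² / p²`. -/
theorem stmt12 {d : ℕ} {ι Ω : Type*} [MeasurableSpace Ω]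
    (μ : Measure Ω) [IsProbabilityMeasure μ]
    (α M : ℝ) (hM : 0 ≤ M) (p f : ℕ) (hp : 0 < p)
    (K : Finset ι) (hK : K.card ≤ f)
    (Y : ι → Ω → EuclideanSpace ℝ (Fin d))
    (hY : ∀ k ∈ K, ∫ ω, ‖Y k ω‖ ^ 2 ∂μ ≤ M ^ 2)
    (hint : ∀ k ∈ K, Integrable (fun ω => ‖Y k ω‖ ^ 2) μ)
    (v x : Ω → EuclideanSpace ℝ (Fin d))
    (hdiff : ∀ ω, v ω - x ω = ∑ k ∈ K, (α / p) • Y k ω) :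
    ∫ ω, ‖v ω - x ω‖ ^ 2 ∂μ ≤ α ^ 2 * (f : ℝ) ^ 2 * M ^ 2 / (p : ℝ) ^ 2 := by
  have hpp : (0:ℝ) < p := by exact_mod_cast hp
  have hpt : ∀ ω, ‖v ω - x ω‖ ^ 2 ≤
      (α / p) ^ 2 * K.card * ∑ k ∈ K, ‖Y k ω‖ ^ 2 := by
    intro ω
    rw [hdiff ω]
    have h1 : ‖∑ k ∈ K, (α / p) • Y k ω‖ ≤ |α / p| * ∑ k ∈ K, ‖Y k ω‖ := by
      refine (norm_sum_le _ _).trans ?_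
      rw [Finset.mul_sum]
      exact Finset.sum_le_sum fun k _ => by rw [norm_smul]; simp [abs_div]
    calc ‖∑ k ∈ K, (α / p) • Y k ω‖ ^ 2
        ≤ (|α / p| * ∑ k ∈ K, ‖Y k ω‖) ^ 2 := by
          apply pow_le_pow_left₀ (norm_nonneg _) h1
      _ = (α / p) ^ 2 * (∑ k ∈ K, ‖Y k ω‖) ^ 2 := by
          rw [mul_pow, sq_abs]
      _ ≤ (α / p) ^ 2 * (K.card * ∑ k ∈ K, ‖Y k ω‖ ^ 2) := by
          apply mul_le_mul_of_nonneg_left _ (by positivity)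
          exact_mod_cast sq_sum_le_card_mul_sum_sq (s := K) (f := fun k => ‖Y k ω‖)
      _ = (α / p) ^ 2 * K.card * ∑ k ∈ K, ‖Y k ω‖ ^ 2 := by ring
  have hintsum : Integrable (fun ω => ∑ k ∈ K, ‖Y k ω‖ ^ 2) μ :=
    integrable_finset_sum _ fun k hk => hint k hk
  calc ∫ ω, ‖v ω - x ω‖ ^ 2 ∂μ
      ≤ ∫ ω, (α / p) ^ 2 * K.card * ∑ k ∈ K, ‖Y k ω‖ ^ 2 ∂μ := by
        refine integral_mono_of_nonneg (Filter.Eventually.of_forall fun ω => by positivity)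
          (hintsum.const_mul _) (Filter.Eventually.of_forall hpt)
    _ = (α / p) ^ 2 * K.card * ∑ k ∈ K, ∫ ω, ‖Y k ω‖ ^ 2 ∂μ := by
        rw [integral_const_mul, integral_finset_sum _ fun k hk => hint k hk]
    _ ≤ (α / p) ^ 2 * K.card * (K.card * M ^ 2) := by
        apply mul_le_mul_of_nonneg_left _ (by positivity)
        calc ∑ k ∈ K, ∫ ω, ‖Y k ω‖ ^ 2 ∂μ ≤ ∑ _k ∈ K, M ^ 2 :=
              Finset.sum_le_sum hY
          _ = K.card * M ^ 2 := by rw [Finset.sum_const, nsmul_eq_mul]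
    _ ≤ α ^ 2 * (f : ℝ) ^ 2 * M ^ 2 / (p : ℝ) ^ 2 := by
        have hKf : (K.card : ℝ) ≤ f := by exact_mod_cast hK
        have hKn : (0:ℝ) ≤ K.card := Nat.cast_nonneg _
        rw [div_pow, div_mul_eq_mul_div, div_mul_eq_mul_div, div_le_div_iff₀ (by positivity) (by positivity)]
        have : (K.card : ℝ) * ((K.card : ℝ) * M ^ 2) ≤ (f:ℝ) * ((f:ℝ) * M ^ 2) := by
          apply mul_le_mul hKf _ (by positivity) (by positivity)
          exact mul_le_mul_of_nonneg_right hKf (by positivity)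
        nlinarith [sq_nonneg α, sq_nonneg (p:ℝ), mul_le_mul_of_nonneg_left this (mul_nonneg (sq_nonneg α) (sq_nonneg (p:ℝ)))]
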